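/- For every positive integer k, the disjoint union G of k copies of the Heawood graph is a 3-regular graph on n = 14k vertices whose eigenvalues λ_i(G) satisfy |λ_i(G)| = √2 for all indices i with k+1 ≤ i ≤ 13k; in particular λ_H(G) = √2 and λ_L(G) = −√2, so the constant √2 in the preceding interval statement cannot be replaced by any smaller number. -/

import Mathlib

open Polynomial in
/-- `μ` is the sequence of adjacency eigenvalues of `G`, listed with multiplicity
in decreasing order (so `μ ⟨i-1,_⟩` is the `i`-th largest eigenvalue `λ_i`). -/
def SimpleGraph.IsEigenvalueSeq {V : Type*} [Fintype V] [DecidableEq V]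
    (G : SimpleGraph V) (μ : Fin (Fintype.card V) → ℝ) : Prop :=
  Antitone μ ∧
    (letI : DecidableRel G.Adj := Classical.decRel _
     (SimpleGraph.adjMatrix ℝ G).charpoly) =
      ∏ i : Fin (Fintype.card V), (X - C (μ i))

/-- The Heawood graph: the bipartite point–line incidence graph of the Fano plane
`PG(2,2)`.  Points and lines are indexed by `ZMod 7`; the line `l` consists of the
points `{l, l+1, l+3}` (the set `{0,1,3}` is a perfect difference set mod 7). -/
def heawoodGraph : SimpleGraph (ZMod 7 ⊕ ZMod 7) :=
  SimpleGraph.fromRel (fun x y =>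
    match x, y with
    | Sum.inl p, Sum.inr l => p - l = 0 ∨ p - l = 1 ∨ p - l = 3
    | _, _ => False)

/-- The disjoint union of `k` copies of the Heawood graph. -/
def kHeawood (k : ℕ) : SimpleGraph (Fin k × (ZMod 7 ⊕ ZMod 7)) where
  Adj x y := x.1 = y.1 ∧ heawoodGraph.Adj x.2 y.2
  symm := ⟨fun _ _ h => ⟨h.1.symm, h.2.symm⟩⟩
  loopless := ⟨fun x h => heawoodGraph.loopless.irrefl x.2 h.2⟩

noncomputable instance (k : ℕ) : DecidableRel (kHeawood k).Adj := Classical.decRel _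

/-! ### Auxiliary decidability instances and computations for the Heawood graph -/

/-- The underlying relation of the Heawood graph, as a standalone definition. -/
def heawoodRel : (ZMod 7 ⊕ ZMod 7) → (ZMod 7 ⊕ ZMod 7) → Prop := fun x y =>
    match x, y with
    | Sum.inl p, Sum.inr l => p - l = 0 ∨ p - l = 1 ∨ p - l = 3
    | _, _ => False

instance : DecidableRel heawoodRel := fun x y =>
  match x, y with
  | Sum.inl p, Sum.inr l => inferInstanceAs (Decidable (p - l = 0 ∨ p - l = 1 ∨ p - l = 3))
  | Sum.inl _, Sum.inl _ => inferInstanceAs (Decidable False)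
  | Sum.inr _, Sum.inl _ => inferInstanceAs (Decidable False)
  | Sum.inr _, Sum.inr _ => inferInstanceAs (Decidable False)

instance heawoodDec : DecidableRel heawoodGraph.Adj := fun x y =>
  decidable_of_iff (x ≠ y ∧ (heawoodRel x y ∨ heawoodRel y x)) Iff.rfl

lemma heawood_degree : ∀ v, heawoodGraph.degree v = 3 := by decide

/-- The adjacency matrix of the Heawood graph over `ℤ`. -/
def heawoodZ : Matrix (ZMod 7 ⊕ ZMod 7) (ZMod 7 ⊕ ZMod 7) ℤ := heawoodGraph.adjMatrix ℤ

set_option maxRecDepth 10000 in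
lemma heawoodZ_rel : heawoodZ * heawoodZ * (heawoodZ * heawoodZ) + 18 =
    11 * (heawoodZ * heawoodZ) := by decide

/-- The adjacency matrix of the Heawood graph over `ℝ`. -/
noncomputable def heawoodR : Matrix (ZMod 7 ⊕ ZMod 7) (ZMod 7 ⊕ ZMod 7) ℝ :=
  heawoodGraph.adjMatrix ℝ

lemma heawoodR_eq_map : heawoodR = (Int.castRingHom ℝ).mapMatrix heawoodZ := by
  ext i j
  simp [heawoodR, heawoodZ, Matrix.map_apply, SimpleGraph.adjMatrix_apply,
    apply_ite (Int.cast : ℤ → ℝ)]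

lemma heawoodR_rel : heawoodR * heawoodR * (heawoodR * heawoodR) + 18 =
    11 * (heawoodR * heawoodR) := by
  have h := congrArg (Int.castRingHom ℝ).mapMatrix heawoodZ_rel
  simp only [map_add, map_mul, map_ofNat] at h
  rw [heawoodR_eq_map]
  exact h

/-! ### Linear-algebra auxiliary lemmas -/

open Polynomial Matrix

section Aux

variable {n : Type*} [Fintype n] [DecidableEq n]

lemma my_charpoly_diagonal (d : n → ℝ) :
    (Matrix.diagonal d).charpoly = ∏ i, (X - C (d i)) := by
  have h : charmatrix (Matrix.diagonal d) = Matrix.diagonal (fun i => (X : ℝ[X]) - C (d i)) := by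
    ext i j
    by_cases hij : i = j
    · subst hij; simp
    · simp [charmatrix_apply_ne _ _ _ hij, Matrix.diagonal_apply_ne _ hij,
        Matrix.diagonal_apply_ne _ hij]
  rw [Matrix.charpoly, h, Matrix.det_diagonal]

lemma my_charpoly_conj (U : Matrix.unitaryGroup n ℝ) (M : Matrix n n ℝ) :
    (star (U : Matrix n n ℝ) * M * U).charpoly = M.charpoly := by
  have hc : charmatrix (star (U : Matrix n n ℝ) * M * (U : Matrix n n ℝ)) =
      (C : ℝ →+* ℝ[X]).mapMatrix (star (U : Matrix n n ℝ)) * charmatrix M *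
        (C : ℝ →+* ℝ[X]).mapMatrix (U : Matrix n n ℝ) := by
    rw [charmatrix, charmatrix, Matrix.mul_sub, Matrix.sub_mul]
    congr 1
    · rw [mul_assoc, (Matrix.scalar_commute (X : ℝ[X]) (Commute.all _) _).eq, ← mul_assoc,
        ← _root_.map_mul, Unitary.coe_star_mul_self, _root_.map_one, one_mul]
    · rw [← _root_.map_mul, ← _root_.map_mul]
  rw [Matrix.charpoly, Matrix.charpoly, hc, Matrix.det_mul, Matrix.det_mul, mul_comm,
    ← mul_assoc, ← Matrix.det_mul,
    ← _root_.map_mul ((C : ℝ →+* ℝ[X]).mapMatrix),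
    Unitary.mul_star_self_of_mem U.2, _root_.map_one, Matrix.det_one, one_mul]

lemma herm_charpoly {A : Matrix n n ℝ} (hA : A.IsHermitian) :
    A.charpoly = ∏ i, (X - C (hA.eigenvalues i)) := by
  have h := hA.conjStarAlgAut_star_eigenvectorUnitary
  rw [Unitary.conjStarAlgAut_star_apply] at h
  have h2 : (RCLike.ofReal ∘ hA.eigenvalues : n → ℝ) = hA.eigenvalues := by
    funext i; simp [RCLike.ofReal_real_eq_id]
  rw [h2] at h
  rw [← my_charpoly_conj hA.eigenvectorUnitary A, h, my_charpoly_diagonal]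

lemma herm_trace_sq {A : Matrix n n ℝ} (hA : A.IsHermitian) :
    Matrix.trace (A * A) = ∑ i, hA.eigenvalues i ^ 2 := by
  have h2 : (RCLike.ofReal ∘ hA.eigenvalues : n → ℝ) = hA.eigenvalues := by
    funext i; simp [RCLike.ofReal_real_eq_id]
  have hsp := hA.spectral_theorem
  rw [h2] at hsp
  rw [Unitary.conjStarAlgAut_apply] at hsp
  set U : Matrix n n ℝ := (hA.eigenvectorUnitary : Matrix n n ℝ) with hU
  have hUU : star U * U = 1 := Unitary.coe_star_mul_self hA.eigenvectorUnitary
  have hAA : A * A = U * (Matrix.diagonal hA.eigenvalues * Matrix.diagonal hA.eigenvalues) *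
      star U := by
    conv_lhs => rw [hsp]
    calc U * Matrix.diagonal hA.eigenvalues * star U * (U * Matrix.diagonal hA.eigenvalues * star U)
        = U * Matrix.diagonal hA.eigenvalues * (star U * U) * Matrix.diagonal hA.eigenvalues *
          star U := by
          simp only [Matrix.mul_assoc]
      _ = _ := by rw [hUU]; simp only [Matrix.mul_one, Matrix.mul_assoc]
  rw [hAA, Matrix.trace_mul_cycle, ← Matrix.mul_assoc, hUU, Matrix.one_mul,
    Matrix.diagonal_mul_diagonal, Matrix.trace_diagonal]
  exact Finset.sum_congr rfl fun i _ => (sq _).symm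

lemma herm_trace {A : Matrix n n ℝ} (hA : A.IsHermitian) :
    Matrix.trace A = ∑ i, hA.eigenvalues i := by
  have h2 : (RCLike.ofReal ∘ hA.eigenvalues : n → ℝ) = hA.eigenvalues := by
    funext i; simp [RCLike.ofReal_real_eq_id]
  have hsp := hA.spectral_theorem
  rw [h2] at hsp
  rw [Unitary.conjStarAlgAut_apply] at hsp
  conv_lhs => rw [hsp]
  rw [Matrix.trace_mul_cycle,
    Unitary.coe_star_mul_self hA.eigenvectorUnitary, Matrix.one_mul, Matrix.trace_diagonal]

lemma exists_eigvec {M : Matrix n n ℝ} {t : ℝ} (h : M.charpoly.eval t = 0) :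
    ∃ v : n → ℝ, v ≠ 0 ∧ M *ᵥ v = t • v := by
  have hmap : (charmatrix M).map (Polynomial.evalRingHom t) = t • (1 : Matrix n n ℝ) - M := by
    ext i j
    by_cases hij : i = j
    · subst hij
      simp [Matrix.map_apply, Matrix.one_apply]
    · simp [Matrix.map_apply, charmatrix_apply_ne _ _ _ hij, Matrix.one_apply_ne hij,
        Matrix.smul_apply]
  have hdet : (t • (1 : Matrix n n ℝ) - M).det = 0 := by
    rw [← hmap]
    have := RingHom.map_det (Polynomial.evalRingHom t) (charmatrix M)
    rw [RingHom.mapMatrix_apply] at this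
    rw [← this]
    simpa [Matrix.charpoly] using h
  obtain ⟨v, hv, hv0⟩ := (Matrix.exists_mulVec_eq_zero_iff).2 hdet
  refine ⟨v, hv, ?_⟩
  rw [Matrix.sub_mulVec, sub_eq_zero, Matrix.smul_mulVec, Matrix.one_mulVec] at hv0
  exact hv0.symm

lemma downset_mem_iff {N : ℕ} {S : Finset (Fin N)}
    (hS : ∀ ⦃i j : Fin N⦄, j ≤ i → i ∈ S → j ∈ S) {i : Fin N} :
    i ∈ S ↔ (i : ℕ) < S.card := by
  constructor
  · intro hi
    have hsub : Finset.Iic i ⊆ S := fun j hj => hS (Finset.mem_Iic.1 hj) hi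
    have hle := Finset.card_le_card hsub
    rw [Fin.card_Iic] at hle
    omega
  · intro hlt
    by_contra hi
    have hsub : S ⊆ Finset.Iio i := fun j hj =>
      Finset.mem_Iio.2 (not_le.1 fun hij => hi (hS hij hj))
    have hle := Finset.card_le_card hsub
    rw [Fin.card_Iio] at hle
    omega

end Aux

set_option maxHeartbeats 3200000 in
/-- For every `k ≥ 1`, the disjoint union `G` of `k` copies of the
Heawood graph is a 3-regular graph on `n = 14k` vertices whose eigenvalues satisfy
`|λ_i(G)| = √2` for all (1-based) indices `i` with `k+1 ≤ i ≤ 13k`; in particular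
the median eigenvalues (1-based positions `H = ⌊(n+1)/2⌋ = 7k` and
`L = ⌈(n+1)/2⌉ = 7k+1`, i.e. 0-indexed positions `(14k-1)/2` and `(14k)/2`) are
`λ_H = √2` and `λ_L = -√2`. -/
theorem kHeawood_median_band (k : ℕ) (hk : 1 ≤ k) :
    Fintype.card (Fin k × (ZMod 7 ⊕ ZMod 7)) = 14 * k ∧
    (kHeawood k).IsRegularOfDegree 3 ∧
    ∀ (μ : Fin (Fintype.card (Fin k × (ZMod 7 ⊕ ZMod 7))) → ℝ),
      (kHeawood k).IsEigenvalueSeq μ →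
      (∀ i : Fin (Fintype.card (Fin k × (ZMod 7 ⊕ ZMod 7))),
        k + 1 ≤ (i : ℕ) + 1 → (i : ℕ) + 1 ≤ 13 * k → |μ i| = Real.sqrt 2) ∧
      (∀ H L : Fin (Fintype.card (Fin k × (ZMod 7 ⊕ ZMod 7))),
        (H : ℕ) = (14 * k - 1) / 2 → (L : ℕ) = (14 * k) / 2 →
        μ H = Real.sqrt 2 ∧ μ L = -Real.sqrt 2) := by
  have hcardV : Fintype.card (Fin k × (ZMod 7 ⊕ ZMod 7)) = 14 * k := by
    simp only [Fintype.card_prod, Fintype.card_sum, ZMod.card, Fintype.card_fin]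
    ring
  have hdeg : ∀ v : Fin k × (ZMod 7 ⊕ ZMod 7), (kHeawood k).degree v = 3 := by
    rintro ⟨a, u⟩
    rw [← SimpleGraph.card_neighborSet_eq_degree, ← heawood_degree u,
      ← SimpleGraph.card_neighborSet_eq_degree]
    apply Fintype.card_congr
    refine ⟨fun x => ⟨x.1.2, x.2.2⟩, fun y => ⟨(a, y.1), rfl, y.2⟩, ?_, ?_⟩
    · rintro ⟨⟨b, w⟩, hb, hw⟩
      cases hb
      rfl
    · rintro ⟨w, hw⟩
      rfl
  refine ⟨hcardV, hdeg, ?_⟩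
  rintro μ ⟨hmono, hCP⟩
  set A : Matrix (Fin k × (ZMod 7 ⊕ ZMod 7)) (Fin k × (ZMod 7 ⊕ ZMod 7)) ℝ :=
    (kHeawood k).adjMatrix ℝ with hAdef
  have hCP' : A.charpoly = ∏ i : Fin (Fintype.card (Fin k × (ZMod 7 ⊕ ZMod 7))), (X - C (μ i)) :=
    hCP
  clear hCP
  -- the reindexed block-diagonal description of `A`
  set e : ((ZMod 7 ⊕ ZMod 7) × Fin k) ≃ (Fin k × (ZMod 7 ⊕ ZMod 7)) :=
    Equiv.prodComm _ _ with he
  have hA' : A = Matrix.reindex e e (Matrix.blockDiagonal fun _ : Fin k => heawoodR) := by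
    ext ⟨a, u⟩ ⟨b, v⟩
    by_cases hab : a = b <;>
      by_cases huv : heawoodGraph.Adj u v <;>
        (rw [hAdef, SimpleGraph.adjMatrix_apply]
         simp [he, Matrix.blockDiagonal_apply, heawoodR, kHeawood, hab, huv, eq_comm])
  set Φ : Matrix (ZMod 7 ⊕ ZMod 7) (ZMod 7 ⊕ ZMod 7) ℝ →+*
      Matrix (Fin k × (ZMod 7 ⊕ ZMod 7)) (Fin k × (ZMod 7 ⊕ ZMod 7)) ℝ :=
    ((Matrix.reindexAlgEquiv ℝ ℝ e).toRingEquiv :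
        Matrix ((ZMod 7 ⊕ ZMod 7) × Fin k) ((ZMod 7 ⊕ ZMod 7) × Fin k) ℝ ≃+* _).toRingHom.comp
      ((Matrix.blockDiagonalRingHom _ _ ℝ).comp (Pi.constRingHom (Fin k) _)) with hΦdef
  have hA'' : A = Φ heawoodR := hA'
  have hrelA : A * A * (A * A) + 18 = 11 * (A * A) := by
    have key := congrArg Φ heawoodR_rel
    simp only [_root_.map_add, _root_.map_mul, _root_.map_ofNat] at key
    rw [hA'']
    exact key
  -- every `μ i` is one of `3, √2, -√2, -3`
  have hs2 : Real.sqrt 2 ^ 2 = 2 := Real.sq_sqrt (by norm_num)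
  have hs2pos : 0 < Real.sqrt 2 := Real.sqrt_pos.2 (by norm_num)
  have hs2lt : Real.sqrt 2 < 2 := by nlinarith
  have hs2gt : 1 < Real.sqrt 2 := by nlinarith
  have hvals : ∀ i, μ i = 3 ∨ μ i = Real.sqrt 2 ∨ μ i = -Real.sqrt 2 ∨ μ i = -3 := by
    intro i
    have hroot : A.charpoly.eval (μ i) = 0 := by
      rw [hCP', eval_prod]
      refine Finset.prod_eq_zero (Finset.mem_univ i) ?_
      simp
    obtain ⟨v, hv0, hAv⟩ := exists_eigvec hroot
    set t := μ i with ht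
    have h2 : (A * A) *ᵥ v = (t ^ 2) • v := by
      rw [← Matrix.mulVec_mulVec, hAv, Matrix.mulVec_smul, hAv, smul_smul, ← sq]
    have h4 : (A * A * (A * A)) *ᵥ v = (t ^ 4) • v := by
      rw [← Matrix.mulVec_mulVec, h2, Matrix.mulVec_smul, h2, smul_smul]
      norm_num
      ring_nf
    have h18 : (18 : Matrix (Fin k × (ZMod 7 ⊕ ZMod 7)) (Fin k × (ZMod 7 ⊕ ZMod 7)) ℝ) *ᵥ v =
        (18 : ℝ) • v := by
      rw [← Matrix.diagonal_ofNat, ← Matrix.smul_one_eq_diagonal, Matrix.smul_mulVec,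
        Matrix.one_mulVec]
    have h11 : (11 * (A * A)) *ᵥ v = (11 * t ^ 2) • v := by
      rw [← Matrix.mulVec_mulVec, h2, Matrix.mulVec_smul, ← Matrix.diagonal_ofNat,
        ← Matrix.smul_one_eq_diagonal, Matrix.smul_mulVec, Matrix.one_mulVec, smul_smul]
      ring_nf
    have happ := congrArg (· *ᵥ v) hrelA
    simp only [Matrix.add_mulVec, h4, h18, h11] at happ
    obtain ⟨j, hj⟩ := Function.ne_iff.1 hv0
    have heq : t ^ 4 + 18 = 11 * t ^ 2 := by
      have := congrFun happ j
      simp only [Pi.add_apply, Pi.smul_apply, smul_eq_mul] at this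
      have h' : (t ^ 4 + 18) * v j = (11 * t ^ 2) * v j := by ring_nf; ring_nf at this; linarith
      exact mul_right_cancel₀ hj h'
    have hfac : (t ^ 2 - 2) * (t ^ 2 - 9) = 0 := by linear_combination heq
    rcases mul_eq_zero.1 hfac with hc | hc
    · have hf2 : (t - Real.sqrt 2) * (t + Real.sqrt 2) = 0 := by linear_combination hc - hs2
      rcases mul_eq_zero.1 hf2 with h | h
      · exact Or.inr (Or.inl (by linarith [sub_eq_zero.1 h]))
      · exact Or.inr (Or.inr (Or.inl (by linarith [eq_neg_of_add_eq_zero_left h])))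
    · have hf3 : (t - 3) * (t + 3) = 0 := by linear_combination hc
      rcases mul_eq_zero.1 hf3 with h | h
      · exact Or.inl (by linarith [sub_eq_zero.1 h])
      · exact Or.inr (Or.inr (Or.inr (by linarith [eq_neg_of_add_eq_zero_left h])))
  -- Hermitian spectral data
  have hH : A.IsHermitian := by
    rw [Matrix.IsHermitian, Matrix.conjTranspose_eq_transpose_of_trivial, hAdef,
      SimpleGraph.transpose_adjMatrix]
  have hCP2 : A.charpoly = ∏ v : Fin k × (ZMod 7 ⊕ ZMod 7), (X - C (hH.eigenvalues v)) :=
    herm_charpoly hH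
  -- multiset of `μ`s equals multiset of eigenvalues
  have hms : Multiset.map μ (Finset.univ : Finset (Fin (Fintype.card
        (Fin k × (ZMod 7 ⊕ ZMod 7))))).val =
      Multiset.map hH.eigenvalues (Finset.univ : Finset (Fin k × (ZMod 7 ⊕ ZMod 7))).val := by
    have h1 := hCP'.symm.trans hCP2
    have r1 : (∏ i : Fin (Fintype.card (Fin k × (ZMod 7 ⊕ ZMod 7))), (X - C (μ i))) =
        ((Multiset.map μ (Finset.univ : Finset (Fin (Fintype.card
          (Fin k × (ZMod 7 ⊕ ZMod 7))))).val).map fun a => X - C a).prod := by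
      rw [Multiset.map_map]
      rfl
    have r2 : (∏ v : Fin k × (ZMod 7 ⊕ ZMod 7), (X - C (hH.eigenvalues v))) =
        ((Multiset.map hH.eigenvalues
          (Finset.univ : Finset (Fin k × (ZMod 7 ⊕ ZMod 7))).val).map fun a => X - C a).prod := by
      rw [Multiset.map_map]
      rfl
    have h2 := congrArg Polynomial.roots ((r1 ▸ r2 ▸ h1 :))
    rwa [Polynomial.roots_multiset_prod_X_sub_C, Polynomial.roots_multiset_prod_X_sub_C] at h2
  have hsum : ∀ f : ℝ → ℝ, ∑ i, f (μ i) = ∑ v, f (hH.eigenvalues v) := by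
    intro f
    have h := congrArg (fun m => (Multiset.map f m).sum) hms
    simpa only [Multiset.map_map, Function.comp, Finset.sum] using h
  -- trace identities
  have htr1 : ∑ i, μ i = 0 := by
    have h := hsum id
    simp only [id] at h
    rw [h, ← herm_trace hH, hAdef, SimpleGraph.trace_adjMatrix]
  have htr2 : ∑ i, (μ i) ^ 2 = 42 * k := by
    have h := hsum (· ^ 2)
    rw [h, ← herm_trace_sq hH]
    have hdiag : ∀ v : Fin k × (ZMod 7 ⊕ ZMod 7), (A * A) v v = (3 : ℝ) := by
      intro v
      rw [hAdef, SimpleGraph.adjMatrix_mul_self_apply_self, hdeg v]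
      norm_num
    rw [Matrix.trace]
    calc ∑ v, (A * A).diag v = ∑ _v : Fin k × (ZMod 7 ⊕ ZMod 7), (3 : ℝ) :=
          Finset.sum_congr rfl fun v _ => hdiag v
      _ = 42 * k := by
          rw [Finset.sum_const, Finset.card_univ, hcardV]
          push_cast
          ring
  classical
  -- the four level sets
  set S3 := Finset.univ.filter (fun i => μ i = 3) with hS3
  set Ss := Finset.univ.filter (fun i => μ i = Real.sqrt 2) with hSs
  set Sn := Finset.univ.filter (fun i => μ i = -Real.sqrt 2) with hSn
  set Sm := Finset.univ.filter (fun i => μ i = -3) with hSm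
  have d1 : Disjoint S3 Ss := by
    rw [Finset.disjoint_left]
    intro i h1 h2
    rw [hS3, Finset.mem_filter] at h1
    rw [hSs, Finset.mem_filter] at h2
    linarith [h1.2, h2.2]
  have d2 : Disjoint (S3 ∪ Ss) Sn := by
    rw [Finset.disjoint_left]
    intro i h1 h2
    rw [hSn, Finset.mem_filter] at h2
    rcases Finset.mem_union.1 h1 with h1 | h1
    · rw [hS3, Finset.mem_filter] at h1
      linarith [h1.2, h2.2]
    · rw [hSs, Finset.mem_filter] at h1
      linarith [h1.2, h2.2]
  have d3 : Disjoint (S3 ∪ Ss ∪ Sn) Sm := by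
    rw [Finset.disjoint_left]
    intro i h1 h2
    rw [hSm, Finset.mem_filter] at h2
    rcases Finset.mem_union.1 h1 with h1 | h1
    · rcases Finset.mem_union.1 h1 with h1 | h1
      · rw [hS3, Finset.mem_filter] at h1
        linarith [h1.2, h2.2]
      · rw [hSs, Finset.mem_filter] at h1
        linarith [h1.2, h2.2]
    · rw [hSn, Finset.mem_filter] at h1
      linarith [h1.2, h2.2]
  have hUniv : (Finset.univ : Finset (Fin (Fintype.card (Fin k × (ZMod 7 ⊕ ZMod 7))))) =
      S3 ∪ Ss ∪ Sn ∪ Sm := by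
    ext i
    simp only [Finset.mem_univ, true_iff, Finset.mem_union, hS3, hSs, hSn, hSm,
      Finset.mem_filter, Finset.mem_univ, true_and]
    have := hvals i
    tauto
  have hpart : ∀ g : ℝ → ℝ, ∑ i, g (μ i) =
      S3.card * g 3 + Ss.card * g (Real.sqrt 2) + Sn.card * g (-Real.sqrt 2) +
        Sm.card * g (-3) := by
    intro g
    have hsplit : ∑ i, g (μ i) = ∑ i ∈ S3 ∪ Ss ∪ Sn ∪ Sm, g (μ i) := by rw [← hUniv]
    rw [hsplit, Finset.sum_union d3, Finset.sum_union d2, Finset.sum_union d1]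
    have c3 : ∑ i ∈ S3, g (μ i) = S3.card * g 3 := by
      have hval : ∀ i ∈ S3, g (μ i) = g ((3 : ℝ)) := by
        intro i hi
        rw [hS3] at hi
        rw [(Finset.mem_filter.1 hi).2]
      rw [Finset.sum_congr rfl hval, Finset.sum_const, nsmul_eq_mul]
    have cs : ∑ i ∈ Ss, g (μ i) = Ss.card * g (Real.sqrt 2) := by
      have hval : ∀ i ∈ Ss, g (μ i) = g (Real.sqrt 2) := by
        intro i hi
        rw [hSs] at hi
        rw [(Finset.mem_filter.1 hi).2]
      rw [Finset.sum_congr rfl hval, Finset.sum_const, nsmul_eq_mul]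
    have cn : ∑ i ∈ Sn, g (μ i) = Sn.card * g (-Real.sqrt 2) := by
      have hval : ∀ i ∈ Sn, g (μ i) = g ((-Real.sqrt 2)) := by
        intro i hi
        rw [hSn] at hi
        rw [(Finset.mem_filter.1 hi).2]
      rw [Finset.sum_congr rfl hval, Finset.sum_const, nsmul_eq_mul]
    have cm : ∑ i ∈ Sm, g (μ i) = Sm.card * g (-3) := by
      have hval : ∀ i ∈ Sm, g (μ i) = g ((-3 : ℝ)) := by
        intro i hi
        rw [hSm] at hi
        rw [(Finset.mem_filter.1 hi).2]
      rw [Finset.sum_congr rfl hval, Finset.sum_const, nsmul_eq_mul]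
    rw [c3, cs, cn, cm]
  have e1 : (S3.card : ℝ) + Ss.card + Sn.card + Sm.card = 14 * k := by
    have h := hpart (fun _ => (1 : ℝ))
    rw [Finset.sum_const, Finset.card_univ, Fintype.card_fin, nsmul_eq_mul, mul_one] at h
    simp only [mul_one] at h
    have h14 : ((Fintype.card (Fin k × (ZMod 7 ⊕ ZMod 7)) : ℕ) : ℝ) = 14 * k := by
      rw [hcardV]; push_cast; ring
    push_cast at h h14 ⊢
    linarith
  have e2 : 3 * (S3.card : ℝ) + Real.sqrt 2 * Ss.card - Real.sqrt 2 * Sn.card -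
      3 * Sm.card = 0 := by
    have h := hpart id
    simp only [id] at h
    rw [htr1] at h
    linarith [h]
  have e3 : 9 * (S3.card : ℝ) + 2 * Ss.card + 2 * Sn.card + 9 * Sm.card = 42 * k := by
    have h := hpart (· ^ 2)
    rw [htr2] at h
    have hn2 : (-Real.sqrt 2) ^ 2 = 2 := by rw [neg_pow]; simp [hs2]
    have h3 : ((3 : ℝ)) ^ 2 = 9 := by norm_num
    have hm3 : ((-3 : ℝ)) ^ 2 = 9 := by norm_num
    rw [hn2, hs2, h3, hm3] at h
    linarith [h]
  -- solve for the multiplicities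
  have hbc : (Ss.card : ℝ) = Sn.card := by
    by_contra hne
    have hd0 : (Ss.card : ℝ) - Sn.card ≠ 0 := sub_ne_zero.2 hne
    have hrval : Real.sqrt 2 = (3 * (Sm.card : ℝ) - 3 * S3.card) / ((Ss.card : ℝ) - Sn.card) := by
      rw [eq_div_iff hd0]
      linear_combination e2
    refine irrational_sqrt_two ⟨(3 * (Sm.card : ℚ) - 3 * S3.card) / ((Ss.card : ℚ) - Sn.card), ?_⟩
    rw [hrval]
    push_cast
    ring
  have had : (S3.card : ℝ) = Sm.card := by
    have : Real.sqrt 2 * (Ss.card : ℝ) - Real.sqrt 2 * Sn.card = 0 := by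
      rw [hbc]; ring
    linarith [e2, this]
  have haN : (S3.card : ℝ) = k := by linarith [e1, e3, hbc, had]
  have hbN : (Ss.card : ℝ) = 6 * k := by linarith [e1, e3, hbc, had, haN]
  have haNat : S3.card = k := by exact_mod_cast haN
  have hbNat : Ss.card = 6 * k := by exact_mod_cast hbN
  have hcNat : Sn.card = 6 * k := by
    have : (Sn.card : ℝ) = 6 * k := by rw [← hbc]; exact hbN
    exact_mod_cast this
  -- threshold (lower) sets
  set T1 := Finset.univ.filter (fun i => (3 : ℝ) ≤ μ i) with hT1
  set T2 := Finset.univ.filter (fun i => Real.sqrt 2 ≤ μ i) with hT2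
  set T3 := Finset.univ.filter (fun i => -Real.sqrt 2 ≤ μ i) with hT3
  have hT1S : T1 = S3 := by
    ext i
    rw [hT1, hS3, Finset.mem_filter, Finset.mem_filter]
    constructor
    · rintro ⟨-, h⟩
      refine ⟨Finset.mem_univ i, ?_⟩
      rcases hvals i with h' | h' | h' | h' <;> [skip; linarith; linarith; linarith]
      exact h'
    · rintro ⟨-, h⟩
      exact ⟨Finset.mem_univ i, by rw [h]⟩
  have hT2S : T2 = S3 ∪ Ss := by
    ext i
    rw [hT2, Finset.mem_union, hS3, hSs, Finset.mem_filter, Finset.mem_filter,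
      Finset.mem_filter]
    constructor
    · rintro ⟨-, h⟩
      rcases hvals i with h' | h' | h' | h' <;>
        [exact Or.inl ⟨Finset.mem_univ i, h'⟩; exact Or.inr ⟨Finset.mem_univ i, h'⟩;
          (exfalso; linarith); (exfalso; linarith)]
    · rintro (⟨-, h⟩ | ⟨-, h⟩) <;> exact ⟨Finset.mem_univ i, by rw [h] <;> linarith⟩
  have hT3S : T3 = S3 ∪ Ss ∪ Sn := by
    ext i
    rw [hT3, Finset.mem_union, Finset.mem_union, hS3, hSs, hSn, Finset.mem_filter,
      Finset.mem_filter, Finset.mem_filter, Finset.mem_filter]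
    constructor
    · rintro ⟨-, h⟩
      rcases hvals i with h' | h' | h' | h' <;>
        [exact Or.inl (Or.inl ⟨Finset.mem_univ i, h'⟩);
          exact Or.inl (Or.inr ⟨Finset.mem_univ i, h'⟩);
          exact Or.inr ⟨Finset.mem_univ i, h'⟩;
          (exfalso; linarith)]
    · rintro ((⟨-, h⟩ | ⟨-, h⟩) | ⟨-, h⟩) <;> exact ⟨Finset.mem_univ i, by rw [h] <;> linarith⟩
  have hcT1 : T1.card = k := by rw [hT1S, haNat]
  have hcT2 : T2.card = 7 * k := by
    rw [hT2S, Finset.card_union_of_disjoint d1, haNat, hbNat]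
    omega
  have hcT3 : T3.card = 13 * k := by
    rw [hT3S, Finset.card_union_of_disjoint d2, Finset.card_union_of_disjoint d1,
      haNat, hbNat, hcNat]
    omega
  have hdown1 : ∀ ⦃i j⦄, j ≤ i → i ∈ T1 → j ∈ T1 := by
    intro i j hji hi
    rw [hT1, Finset.mem_filter] at hi ⊢
    exact ⟨Finset.mem_univ j, le_trans hi.2 (hmono hji)⟩
  have hdown2 : ∀ ⦃i j⦄, j ≤ i → i ∈ T2 → j ∈ T2 := by
    intro i j hji hi
    rw [hT2, Finset.mem_filter] at hi ⊢
    exact ⟨Finset.mem_univ j, le_trans hi.2 (hmono hji)⟩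
  have hdown3 : ∀ ⦃i j⦄, j ≤ i → i ∈ T3 → j ∈ T3 := by
    intro i j hji hi
    rw [hT3, Finset.mem_filter] at hi ⊢
    exact ⟨Finset.mem_univ j, le_trans hi.2 (hmono hji)⟩
  have hm1 : ∀ i, i ∈ T1 ↔ (i : ℕ) < k := fun i => by
    rw [downset_mem_iff hdown1, hcT1]
  have hm2 : ∀ i, i ∈ T2 ↔ (i : ℕ) < 7 * k := fun i => by
    rw [downset_mem_iff hdown2, hcT2]
  have hm3 : ∀ i, i ∈ T3 ↔ (i : ℕ) < 13 * k := fun i => by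
    rw [downset_mem_iff hdown3, hcT3]
  have hle1 : ∀ i, i ∈ T1 ↔ (3 : ℝ) ≤ μ i := fun i => by
    rw [hT1, Finset.mem_filter]
    simp
  have hle2 : ∀ i, i ∈ T2 ↔ Real.sqrt 2 ≤ μ i := fun i => by
    rw [hT2, Finset.mem_filter]
    simp
  have hle3 : ∀ i, i ∈ T3 ↔ -Real.sqrt 2 ≤ μ i := fun i => by
    rw [hT3, Finset.mem_filter]
    simp
  constructor
  · intro i hi1 hi2
    have hik : ¬ (i : ℕ) < k := by omega
    have hi13 : (i : ℕ) < 13 * k := by omega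
    have h3 : ¬ (3 : ℝ) ≤ μ i := fun h => hik ((hm1 i).1 ((hle1 i).2 h))
    have hnr : -Real.sqrt 2 ≤ μ i := (hle3 i).1 ((hm3 i).2 hi13)
    rcases hvals i with h | h | h | h
    · exact absurd (by rw [h]) h3
    · rw [h, abs_of_nonneg hs2pos.le]
    · rw [h, abs_neg, abs_of_nonneg hs2pos.le]
    · exfalso
      rw [h] at hnr
      linarith
  · intro H L hHv hLv
    have hHval : (H : ℕ) = 7 * k - 1 := by omega
    have hLval : (L : ℕ) = 7 * k := by omega
    constructor
    · have hHT2 : H ∈ T2 := (hm2 H).2 (by omega)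
      have hHr : Real.sqrt 2 ≤ μ H := (hle2 H).1 hHT2
      have hH3 : ¬ (3 : ℝ) ≤ μ H := fun h => by
        have := (hm1 H).1 ((hle1 H).2 h)
        omega
      rcases hvals H with h | h | h | h
      · exact absurd (by rw [h]) hH3
      · exact h
      · exfalso; rw [h] at hHr; linarith
      · exfalso; rw [h] at hHr; linarith
    · have hLT3 : L ∈ T3 := (hm3 L).2 (by omega)
      have hLr : -Real.sqrt 2 ≤ μ L := (hle3 L).1 hLT3
      have hL2 : ¬ Real.sqrt 2 ≤ μ L := fun h => by
        have := (hm2 L).1 ((hle2 L).2 h)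
        omega
      rcases hvals L with h | h | h | h
      · exfalso; exact hL2 (by rw [h]; linarith)
      · exfalso; exact hL2 (by rw [h])
      · exact h
      · exfalso; rw [h] at hLr; linarith
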